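/- Say that dimension n admits a choir of size k if there exist k full-rank lattices in ℝⁿ that are mutually isospectral and pairwise incongruent. If dimension m admits a choir of size k and dimension n admits a choir of size l, then dimension m + n admits a choir of size k·l; i.e. the choir numbers satisfy ♭_{m+n} ≥ ♭_m · ♭_n for all m, n ≥ 1. -/

import Mathlib

open Matrix

/-- A full-rank lattice in `ℝⁿ`: a set of the form `Mℤⁿ` for an invertible real matrix. -/
def IsLattice {n : ℕ} (Γ : Set (Fin n → ℝ)) : Prop :=
  ∃ M : Matrix (Fin n) (Fin n) ℝ, M.det ≠ 0 ∧
    Γ = {v | ∃ z : Fin n → ℤ, v = M.mulVec fun i => ((z i : ℝ))}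

/-- Two lattices are isospectral if for every real `t` the sets of vectors of squared
Euclidean norm `t` are finite and have the same cardinality. -/
def Isospectral {n : ℕ} (Γ₁ Γ₂ : Set (Fin n → ℝ)) : Prop :=
  ∀ t : ℝ,
    {v ∈ Γ₁ | (∑ i, (v i) ^ 2) = t}.Finite ∧
    {v ∈ Γ₂ | (∑ i, (v i) ^ 2) = t}.Finite ∧
    {v ∈ Γ₁ | (∑ i, (v i) ^ 2) = t}.ncard = {v ∈ Γ₂ | (∑ i, (v i) ^ 2) = t}.ncard

/-- Two lattices are congruent if an orthogonal matrix maps one onto the other. -/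
def LatticeCongruent {n : ℕ} (Γ₁ Γ₂ : Set (Fin n → ℝ)) : Prop :=
  ∃ C : Matrix (Fin n) (Fin n) ℝ, Cᵀ * C = 1 ∧ (fun v => C.mulVec v) '' Γ₁ = Γ₂

/-- Dimension `n` admits a choir of size `k` if there exist `k` mutually isospectral,
pairwise incongruent full-rank lattices in `ℝⁿ`. -/
def AdmitsChoir (n k : ℕ) : Prop :=
  ∃ Γ : Fin k → Set (Fin n → ℝ),
    (∀ i, IsLattice (Γ i)) ∧
    (∀ i j, Isospectral (Γ i) (Γ j)) ∧
    (∀ i j, i ≠ j → ¬ LatticeCongruent (Γ i) (Γ j))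

namespace Stmt17
noncomputable section
variable {m n d : ℕ}

def nsq {d : ℕ} (v : Fin d → ℝ) : ℝ := ∑ i, (v i) ^ 2

lemma nsq_nonneg (v : Fin d → ℝ) : 0 ≤ nsq v :=
  Finset.sum_nonneg fun i _ => sq_nonneg _

lemma nsq_eq_zero {v : Fin d → ℝ} (h : nsq v = 0) : v = 0 := by
  funext i
  have := (Finset.sum_eq_zero_iff_of_nonneg (fun i _ => sq_nonneg (v i))).1 h i (Finset.mem_univ i)
  exact sq_eq_zero_iff.mp this

@[simp] lemma nsq_zero : nsq (0 : Fin d → ℝ) = 0 := by simp [nsq]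

lemma nsq_smul (c : ℝ) (v : Fin d → ℝ) : nsq (c • v) = c ^ 2 * nsq v := by
  simp [nsq, mul_pow, Finset.mul_sum]

lemma nsq_append (u : Fin m → ℝ) (v : Fin n → ℝ) :
    nsq (Fin.append u v) = nsq u + nsq v := by
  rw [nsq, Fin.sum_univ_add]
  simp [nsq]

lemma nsq_mulVec {C : Matrix (Fin d) (Fin d) ℝ} (h : Cᵀ * C = 1) (v : Fin d → ℝ) :
    nsq (C.mulVec v) = nsq v := by
  have h1 : ∀ w : Fin d → ℝ, nsq w = w ⬝ᵥ w := by
    intro w; simp [nsq, dotProduct, sq]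
  rw [h1, h1]
  have h2 : Cᵀ *ᵥ (C *ᵥ v) = v := by rw [mulVec_mulVec, h, one_mulVec]
  calc C *ᵥ v ⬝ᵥ C *ᵥ v = (v ᵥ* Cᵀ) ⬝ᵥ (C *ᵥ v) := by rw [vecMul_transpose]
    _ = v ⬝ᵥ (Cᵀ *ᵥ (C *ᵥ v)) := (dotProduct_mulVec _ _ _).symm
    _ = v ⬝ᵥ v := by rw [h2]

end
end Stmt17

namespace Stmt17
noncomputable section
variable {m n d : ℕ}

/-- membership description -/
lemma lattice_zero_mem {Γ : Set (Fin d → ℝ)} (h : IsLattice Γ) : 0 ∈ Γ := by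
  obtain ⟨M, _, rfl⟩ := h
  refine ⟨0, ?_⟩
  funext i
  simp [Matrix.mulVec, dotProduct]

lemma lattice_countable {Γ : Set (Fin d → ℝ)} (h : IsLattice Γ) : Γ.Countable := by
  obtain ⟨M, _, rfl⟩ := h
  have : {v : Fin d → ℝ | ∃ z : Fin d → ℤ, v = M.mulVec fun i => ((z i : ℝ))} =
      Set.range (fun z : Fin d → ℤ => M.mulVec fun i => ((z i : ℝ))) := by
    ext v; simp [Set.range, eq_comm]
  rw [this]
  exact Set.countable_range _

lemma lattice_sublevel_finite {Γ : Set (Fin d → ℝ)} (h : IsLattice Γ) (t : ℝ) :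
    {v ∈ Γ | nsq v ≤ t}.Finite := by
  obtain ⟨M, hM, rfl⟩ := h
  set f : (Fin d → ℤ) → (Fin d → ℝ) := fun z => M.mulVec fun i => ((z i : ℝ)) with hf
  set s : ℝ := Real.sqrt (max t 0) with hs
  have hs0 : 0 ≤ s := Real.sqrt_nonneg _
  set R : ℝ := (∑ p : Fin d × Fin d, |M⁻¹ p.1 p.2|) * s with hR
  -- every z in the sublevel set is bounded
  have key : ∀ z : Fin d → ℤ, nsq (f z) ≤ t → ∀ i, |(z i : ℝ)| ≤ R := by
    intro z hz i
    have hcomp : ∀ j, |f z j| ≤ s := by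
      intro j
      have h1 : (f z j) ^ 2 ≤ max t 0 := by
        refine le_trans ?_ (le_max_left t 0)
        refine le_trans ?_ hz
        exact Finset.single_le_sum (f := fun j => (f z j) ^ 2)
          (fun j _ => sq_nonneg _) (Finset.mem_univ j)
      calc |f z j| = Real.sqrt ((f z j) ^ 2) := by rw [Real.sqrt_sq_eq_abs]
        _ ≤ s := Real.sqrt_le_sqrt h1
    have hz' : (fun i => (z i : ℝ)) = M⁻¹ *ᵥ f z := by
      rw [hf, mulVec_mulVec, Matrix.nonsing_inv_mul M (isUnit_iff_ne_zero.mpr hM), one_mulVec]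
    have : (z i : ℝ) = ∑ j, M⁻¹ i j * f z j := by
      rw [show (z i : ℝ) = (fun i => (z i : ℝ)) i from rfl, hz']; rfl
    rw [this]
    calc |∑ j, M⁻¹ i j * f z j| ≤ ∑ j, |M⁻¹ i j * f z j| := Finset.abs_sum_le_sum_abs _ _
      _ ≤ ∑ j, |M⁻¹ i j| * s := by
          refine Finset.sum_le_sum fun j _ => ?_
          rw [abs_mul]
          exact mul_le_mul_of_nonneg_left (hcomp j) (abs_nonneg _)
      _ = (∑ j, |M⁻¹ i j|) * s := by rw [Finset.sum_mul]
      _ ≤ R := by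
          refine mul_le_mul_of_nonneg_right ?_ hs0
          have := Finset.sum_le_sum_of_subset_of_nonneg
            (Finset.subset_univ ((Finset.univ : Finset (Fin d)).image (fun j => ((i, j) : Fin d × Fin d))))
            (fun p _ _ => abs_nonneg (M⁻¹ p.1 p.2))
          refine le_trans (le_of_eq ?_) this
          rw [Finset.sum_image (by intro a _ b _ hab; exact congrArg Prod.snd hab)]
  -- hence the integer points form a finite set
  have hfin : {z : Fin d → ℤ | nsq (f z) ≤ t}.Finite := by
    refine Set.Finite.subset (Set.finite_Icc (fun _ : Fin d => (-⌈R⌉ : ℤ)) (fun _ => ⌈R⌉)) ?_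
    intro z hz
    rw [Set.mem_Icc]
    constructor <;> intro i
    · have := (abs_le.mp (key z hz i)).1
      have h2 : (-⌈R⌉ : ℝ) ≤ (z i : ℝ) := le_trans (neg_le_neg (Int.le_ceil R)) this
      exact_mod_cast h2
    · have := (abs_le.mp (key z hz i)).2
      have h2 : (z i : ℝ) ≤ (⌈R⌉ : ℝ) := le_trans this (Int.le_ceil R)
      exact_mod_cast h2
  refine Set.Finite.subset (hfin.image f) ?_
  rintro v ⟨⟨z, rfl⟩, hv⟩
  exact ⟨z, hv, rfl⟩

/-- level sets of lattices are finite -/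
lemma lattice_level_finite {Γ : Set (Fin d → ℝ)} (h : IsLattice Γ) (t : ℝ) :
    {v ∈ Γ | nsq v = t}.Finite :=
  (lattice_sublevel_finite h t).subset (fun v hv => ⟨hv.1, le_of_eq hv.2⟩)

/-- between two finite sets of equal cardinality there is a bijection -/
lemma exists_bijOn_of_ncard {α : Type*} {s t : Set α} (hs : s.Finite) (ht : t.Finite)
    (h : s.ncard = t.ncard) : ∃ f : α → α, Set.BijOn f s t := by
  haveI := hs.to_subtype
  haveI := ht.to_subtype
  have hcard : Nat.card s = Nat.card t := by
    rw [Nat.card_coe_set_eq, Nat.card_coe_set_eq, h]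
  obtain ⟨e⟩ := Finite.card_eq.mp hcard
  classical
  refine ⟨fun x => if hx : x ∈ s then (e ⟨x, hx⟩ : α) else x, ?_, ?_, ?_⟩
  · intro x hx; simp only [dif_pos hx]; exact (e ⟨x, hx⟩).2
  · intro x hx y hy hxy
    simp only [dif_pos hx, dif_pos hy] at hxy
    have := e.injective (Subtype.coe_injective hxy)
    exact congrArg Subtype.val this
  · intro y hy
    refine ⟨(e.symm ⟨y, hy⟩ : α), (e.symm ⟨y, hy⟩).2, ?_⟩
    simp only [dif_pos (e.symm ⟨y, hy⟩).2]
    rw [Subtype.coe_eta, Equiv.apply_symm_apply]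

/-- an isospectrality yields a norm-preserving bijection -/
lemma exists_npbij {Γ₁ Γ₂ : Set (Fin d → ℝ)} (h : Isospectral Γ₁ Γ₂) :
    ∃ g : (Fin d → ℝ) → (Fin d → ℝ), Set.BijOn g Γ₁ Γ₂ ∧ ∀ v ∈ Γ₁, nsq (g v) = nsq v := by
  have hF : ∀ t : ℝ, ∃ f, Set.BijOn f {v ∈ Γ₁ | nsq v = t} {v ∈ Γ₂ | nsq v = t} := by
    intro t
    obtain ⟨h1, h2, h3⟩ := h t
    exact exists_bijOn_of_ncard h1 h2 h3
  choose F hFbij using hF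
  refine ⟨fun v => F (nsq v) v, ?_, ?_⟩
  · constructor
    · intro v hv
      exact ((hFbij (nsq v)).mapsTo ⟨hv, rfl⟩).1
    constructor
    · intro v hv w hw hvw
      change F (nsq v) v = F (nsq w) w at hvw
      have hv' : v ∈ {x ∈ Γ₁ | nsq x = nsq v} := ⟨hv, rfl⟩
      have hnv : nsq (F (nsq v) v) = nsq v := ((hFbij (nsq v)).mapsTo hv').2
      have hw' : w ∈ {x ∈ Γ₁ | nsq x = nsq w} := ⟨hw, rfl⟩
      have hnw : nsq (F (nsq w) w) = nsq w := ((hFbij (nsq w)).mapsTo hw').2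
      have heq : nsq v = nsq w := by rw [← hnv, ← hnw, hvw]
      refine (hFbij (nsq v)).injOn hv' ?_ ?_
      · exact ⟨hw, heq.symm⟩
      · rw [hvw, heq]
    · intro w hw
      obtain ⟨v, hv, hv2⟩ := (hFbij (nsq w)).surjOn ⟨hw, rfl⟩
      refine ⟨v, hv.1, ?_⟩
      simp only
      rw [hv.2, hv2]
  · intro v hv
    exact ((hFbij (nsq v)).mapsTo ⟨hv, rfl⟩).2

/-- conversely, a norm-preserving bijection with finite level sets gives isospectrality -/
lemma iso_of_npbij {Γ₁ Γ₂ : Set (Fin d → ℝ)}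
    (h₁ : ∀ t, {v ∈ Γ₁ | nsq v = t}.Finite) (h₂ : ∀ t, {v ∈ Γ₂ | nsq v = t}.Finite)
    (g : (Fin d → ℝ) → (Fin d → ℝ)) (hb : Set.BijOn g Γ₁ Γ₂)
    (hn : ∀ v ∈ Γ₁, nsq (g v) = nsq v) : Isospectral Γ₁ Γ₂ := by
  intro t
  refine ⟨h₁ t, h₂ t, ?_⟩
  have himg : g '' {v ∈ Γ₁ | nsq v = t} = {v ∈ Γ₂ | nsq v = t} := by
    ext w
    constructor
    · rintro ⟨v, ⟨hv, hvt⟩, rfl⟩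
      exact ⟨hb.mapsTo hv, by rw [hn v hv, hvt]⟩
    · rintro ⟨hw, hwt⟩
      obtain ⟨v, hv, rfl⟩ := hb.surjOn hw
      exact ⟨v, ⟨hv, by rw [← hn v hv, hwt]⟩, rfl⟩
  have key : {v ∈ Γ₁ | nsq v = t}.ncard = {v ∈ Γ₂ | nsq v = t}.ncard := by
    calc {v ∈ Γ₁ | nsq v = t}.ncard
        = (g '' {v ∈ Γ₁ | nsq v = t}).ncard :=
          (Set.ncard_image_of_injOn (hb.injOn.mono fun v hv => hv.1)).symm
      _ = _ := congrArg Set.ncard himg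
  exact key

/-! ### products -/

def pr {m n : ℕ} (c : ℝ) (Γ : Set (Fin m → ℝ)) (Δ : Set (Fin n → ℝ)) :
    Set (Fin (m + n) → ℝ) :=
  {w | ∃ u ∈ Γ, ∃ v ∈ Δ, w = Fin.append u (c • v)}

def leftOf {m n : ℕ} (w : Fin (m + n) → ℝ) : Fin m → ℝ := fun i => w (Fin.castAdd n i)
def rightOf {m n : ℕ} (w : Fin (m + n) → ℝ) : Fin n → ℝ := fun j => w (Fin.natAdd m j)

@[simp] lemma leftOf_append (u : Fin m → ℝ) (v : Fin n → ℝ) : leftOf (Fin.append u v) = u := by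
  funext i; simp [leftOf]

@[simp] lemma rightOf_append (u : Fin m → ℝ) (v : Fin n → ℝ) : rightOf (Fin.append u v) = v := by
  funext j; simp [rightOf]

lemma append_eq_elim {α : Type*} (x : Fin m → α) (y : Fin n → α) :
    Fin.append x y = (Sum.elim x y) ∘ finSumFinEquiv.symm := by
  funext i
  induction i using Fin.addCases with
  | left i => simp
  | right i => simp

lemma cast_append (zx : Fin m → ℤ) (zy : Fin n → ℤ) :
    (fun i => ((Fin.append zx zy i : ℤ) : ℝ)) =
      Fin.append (fun a => ((zx a : ℤ) : ℝ)) (fun b => ((zy b : ℤ) : ℝ)) := by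
  funext i
  induction i using Fin.addCases with
  | left i => simp
  | right i => simp

def blockMat {m n : ℕ} (M : Matrix (Fin m) (Fin m) ℝ) (N : Matrix (Fin n) (Fin n) ℝ) :
    Matrix (Fin (m + n)) (Fin (m + n)) ℝ :=
  (Matrix.fromBlocks M 0 0 N).submatrix finSumFinEquiv.symm finSumFinEquiv.symm

lemma blockMat_mulVec (M : Matrix (Fin m) (Fin m) ℝ) (N : Matrix (Fin n) (Fin n) ℝ)
    (x : Fin m → ℝ) (y : Fin n → ℝ) :
    blockMat M N *ᵥ Fin.append x y = Fin.append (M *ᵥ x) (N *ᵥ y) := by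
  rw [blockMat, append_eq_elim x y, submatrix_mulVec_equiv]
  have h1 : (Sum.elim x y ∘ finSumFinEquiv.symm) ∘ ⇑finSumFinEquiv.symm.symm = Sum.elim x y := by
    funext i; simp
  rw [h1, fromBlocks_mulVec]
  rw [append_eq_elim]
  congr 1
  simp

lemma blockMat_det (M : Matrix (Fin m) (Fin m) ℝ) (N : Matrix (Fin n) (Fin n) ℝ) :
    (blockMat M N).det = M.det * N.det := by
  rw [blockMat, Matrix.det_submatrix_equiv_self, Matrix.det_fromBlocks_zero₂₁]

lemma pr_isLattice {c : ℝ} (hc : c ≠ 0) {Γ : Set (Fin m → ℝ)} {Δ : Set (Fin n → ℝ)}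
    (hΓ : IsLattice Γ) (hΔ : IsLattice Δ) : IsLattice (pr c Γ Δ) := by
  obtain ⟨M, hM, rfl⟩ := hΓ
  obtain ⟨N, hN, rfl⟩ := hΔ
  refine ⟨blockMat M (c • N), ?_, ?_⟩
  · rw [blockMat_det]
    simp only [Matrix.det_smul]
    refine mul_ne_zero hM ?_
    exact mul_ne_zero (pow_ne_zero _ hc) hN
  · ext w
    constructor
    · rintro ⟨u, ⟨zx, rfl⟩, v, ⟨zy, rfl⟩, rfl⟩
      refine ⟨Fin.append zx zy, ?_⟩
      rw [cast_append, blockMat_mulVec]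
      congr 1
      rw [smul_mulVec]
    · rintro ⟨z, rfl⟩
      refine ⟨M *ᵥ fun a => ((z (Fin.castAdd n a) : ℤ) : ℝ), ⟨_, rfl⟩,
              N *ᵥ fun b => ((z (Fin.natAdd m b) : ℤ) : ℝ), ⟨_, rfl⟩, ?_⟩
      have hz : z = Fin.append (fun a => z (Fin.castAdd n a)) (fun b => z (Fin.natAdd m b)) := by
        funext i
        induction i using Fin.addCases with
        | left i => simp
        | right i => simp
      rw [hz, cast_append, blockMat_mulVec, smul_mulVec]
      simp only [Fin.append_left, Fin.append_right]

lemma pr_mem {c : ℝ} {Γ : Set (Fin m → ℝ)} {Δ : Set (Fin n → ℝ)} {u v}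
    (hu : u ∈ Γ) (hv : v ∈ Δ) : Fin.append u (c • v) ∈ pr c Γ Δ :=
  ⟨u, hu, v, hv, rfl⟩

lemma pr_iso {c : ℝ} (hc : c ≠ 0) {Γ₁ Γ₂ : Set (Fin m → ℝ)} {Δ₁ Δ₂ : Set (Fin n → ℝ)}
    (l₁ : IsLattice Γ₁) (l₂ : IsLattice Γ₂) (k₁ : IsLattice Δ₁) (k₂ : IsLattice Δ₂)
    (hΓ : Isospectral Γ₁ Γ₂) (hΔ : Isospectral Δ₁ Δ₂) :
    Isospectral (pr c Γ₁ Δ₁) (pr c Γ₂ Δ₂) := by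
  obtain ⟨g, hg, hgn⟩ := exists_npbij hΓ
  obtain ⟨h, hh, hhn⟩ := exists_npbij hΔ
  set G : (Fin (m + n) → ℝ) → (Fin (m + n) → ℝ) :=
    fun w => Fin.append (g (leftOf w)) (c • h (c⁻¹ • rightOf w)) with hG
  have hGapp : ∀ u v, G (Fin.append u (c • v)) = Fin.append (g u) (c • h v) := by
    intro u v
    rw [hG]
    simp only [leftOf_append, rightOf_append, inv_smul_smul₀ hc]
  refine iso_of_npbij (fun t => lattice_level_finite (pr_isLattice hc l₁ k₁) t)
    (fun t => lattice_level_finite (pr_isLattice hc l₂ k₂) t) G ?_ ?_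
  · refine ⟨?_, ?_, ?_⟩
    · rintro w ⟨u, hu, v, hv, rfl⟩
      rw [hGapp]
      exact pr_mem (hg.mapsTo hu) (hh.mapsTo hv)
    · rintro w ⟨u, hu, v, hv, rfl⟩ w' ⟨u', hu', v', hv', rfl⟩ hww
      rw [hGapp, hGapp] at hww
      have h1 : g u = g u' := by
        have := congrArg leftOf hww; simpa using this
      have h2 : c • h v = c • h v' := by
        have := congrArg rightOf hww; simpa using this
      have hu2 : u = u' := hg.injOn hu hu' h1
      have hv2 : v = v' := hh.injOn hv hv' (smul_right_injective _ hc h2)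
      rw [hu2, hv2]
    · rintro w ⟨u', hu', v', hv', rfl⟩
      obtain ⟨u, hu, rfl⟩ := hg.surjOn hu'
      obtain ⟨v, hv, rfl⟩ := hh.surjOn hv'
      exact ⟨Fin.append u (c • v), pr_mem hu hv, hGapp u v⟩
  · rintro w ⟨u, hu, v, hv, rfl⟩
    rw [hGapp, nsq_append, nsq_append, nsq_smul, nsq_smul, hgn u hu, hhn v hv]

/-! ### characterizations of the factors inside a product -/

lemma pr_left_char {c : ℝ} {Γ : Set (Fin m → ℝ)} {Δ : Set (Fin n → ℝ)}
    (kΔ : IsLattice Δ) {A B : Set ℝ}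
    (hA : ∀ u ∈ Γ, nsq u ∈ A) (hB : ∀ v ∈ Δ, nsq v ∈ B)
    (sep1 : ∀ a ∈ A, ∀ b ∈ B, a + c ^ 2 * b ∈ A → b = 0) :
    {w ∈ pr c Γ Δ | nsq w ∈ A} = (fun u => Fin.append u (0 : Fin n → ℝ)) '' Γ := by
  ext w
  constructor
  · rintro ⟨⟨u, hu, v, hv, rfl⟩, hw⟩
    rw [nsq_append, nsq_smul] at hw
    have hb : nsq v = 0 := sep1 _ (hA u hu) _ (hB v hv) hw
    have hv0 : v = 0 := nsq_eq_zero hb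
    exact ⟨u, hu, by rw [hv0, smul_zero]⟩
  · rintro ⟨u, hu, rfl⟩
    refine ⟨⟨u, hu, 0, lattice_zero_mem kΔ, by rw [smul_zero]⟩, ?_⟩
    rw [nsq_append, nsq_zero, add_zero]
    exact hA u hu

lemma pr_right_char {c : ℝ} {Γ : Set (Fin m → ℝ)} {Δ : Set (Fin n → ℝ)}
    (kΓ : IsLattice Γ) {A B : Set ℝ}
    (hA : ∀ u ∈ Γ, nsq u ∈ A) (hB : ∀ v ∈ Δ, nsq v ∈ B)
    (sep2 : ∀ a ∈ A, ∀ b ∈ B, a + c ^ 2 * b ∈ (fun x => c ^ 2 * x) '' B → a = 0) :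
    {w ∈ pr c Γ Δ | nsq w ∈ (fun x => c ^ 2 * x) '' B} =
      (fun v => Fin.append (0 : Fin m → ℝ) (c • v)) '' Δ := by
  ext w
  constructor
  · rintro ⟨⟨u, hu, v, hv, rfl⟩, hw⟩
    rw [nsq_append, nsq_smul] at hw
    have ha : nsq u = 0 := sep2 _ (hA u hu) _ (hB v hv) hw
    have hu0 : u = 0 := nsq_eq_zero ha
    exact ⟨v, hv, by rw [hu0]⟩
  · rintro ⟨v, hv, rfl⟩
    refine ⟨⟨0, lattice_zero_mem kΓ, v, hv, rfl⟩, ?_⟩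
    rw [nsq_append, nsq_zero, zero_add, nsq_smul]
    exact ⟨nsq v, hB v hv, rfl⟩

/-! ### blocks of a matrix on `Fin (m+n)` -/

def tl (C : Matrix (Fin (m + n)) (Fin (m + n)) ℝ) : Matrix (Fin m) (Fin m) ℝ :=
  Matrix.of fun a b => C (Fin.castAdd n a) (Fin.castAdd n b)
def tr (C : Matrix (Fin (m + n)) (Fin (m + n)) ℝ) : Matrix (Fin m) (Fin n) ℝ :=
  Matrix.of fun a b => C (Fin.castAdd n a) (Fin.natAdd m b)
def bl (C : Matrix (Fin (m + n)) (Fin (m + n)) ℝ) : Matrix (Fin n) (Fin m) ℝ :=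
  Matrix.of fun a b => C (Fin.natAdd m a) (Fin.castAdd n b)
def br (C : Matrix (Fin (m + n)) (Fin (m + n)) ℝ) : Matrix (Fin n) (Fin n) ℝ :=
  Matrix.of fun a b => C (Fin.natAdd m a) (Fin.natAdd m b)

lemma mulVec_append (C : Matrix (Fin (m + n)) (Fin (m + n)) ℝ)
    (x : Fin m → ℝ) (y : Fin n → ℝ) :
    C *ᵥ Fin.append x y =
      Fin.append (tl C *ᵥ x + tr C *ᵥ y) (bl C *ᵥ x + br C *ᵥ y) := by
  funext i
  induction i using Fin.addCases with
  | left i =>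
    simp [Matrix.mulVec, dotProduct, Fin.sum_univ_add, Fin.append_left, Fin.append_right,
      tl, tr]
  | right i =>
    simp [Matrix.mulVec, dotProduct, Fin.sum_univ_add, Fin.append_left, Fin.append_right,
      bl, br]

lemma block_orth_tl {C : Matrix (Fin (m + n)) (Fin (m + n)) ℝ} (hC : Cᵀ * C = 1)
    (h21 : bl C = 0) : (tl C)ᵀ * tl C = 1 := by
  ext a b
  have h := congrFun (congrFun hC (Fin.castAdd n a)) (Fin.castAdd n b)
  rw [Matrix.mul_apply] at h
  rw [Fin.sum_univ_add] at h
  have h2 : ∑ i : Fin n, Cᵀ (Fin.castAdd n a) (Fin.natAdd m i) * C (Fin.natAdd m i) (Fin.castAdd n b) = 0 := by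
    refine Finset.sum_eq_zero fun i _ => ?_
    have : C (Fin.natAdd m i) (Fin.castAdd n b) = 0 := by
      have := congrFun (congrFun h21 i) b
      simpa [bl] using this
    rw [this, mul_zero]
  rw [h2, add_zero] at h
  rw [Matrix.mul_apply]
  calc ∑ i, (tl C)ᵀ a i * tl C i b
      = ∑ i : Fin m, Cᵀ (Fin.castAdd n a) (Fin.castAdd n i) * C (Fin.castAdd n i) (Fin.castAdd n b) := by
        refine Finset.sum_congr rfl fun i _ => ?_
        simp [tl, Matrix.transpose_apply]
    _ = (1 : Matrix (Fin (m + n)) (Fin (m + n)) ℝ) (Fin.castAdd n a) (Fin.castAdd n b) := h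
    _ = (1 : Matrix (Fin m) (Fin m) ℝ) a b := by
        by_cases hab : a = b
        · subst hab; simp
        · rw [Matrix.one_apply_ne hab, Matrix.one_apply_ne]
          intro hcon
          apply hab
          have hval := congrArg Fin.val hcon
          simp at hval
          exact Fin.ext hval

lemma block_orth_br {C : Matrix (Fin (m + n)) (Fin (m + n)) ℝ} (hC : Cᵀ * C = 1)
    (h12 : tr C = 0) : (br C)ᵀ * br C = 1 := by
  ext a b
  have h := congrFun (congrFun hC (Fin.natAdd m a)) (Fin.natAdd m b)
  rw [Matrix.mul_apply] at h
  rw [Fin.sum_univ_add] at h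
  have h2 : ∑ i : Fin m, Cᵀ (Fin.natAdd m a) (Fin.castAdd n i) * C (Fin.castAdd n i) (Fin.natAdd m b) = 0 := by
    refine Finset.sum_eq_zero fun i _ => ?_
    have : C (Fin.castAdd n i) (Fin.natAdd m b) = 0 := by
      have := congrFun (congrFun h12 i) b
      simpa [tr] using this
    rw [this, mul_zero]
  rw [h2, zero_add] at h
  rw [Matrix.mul_apply]
  calc ∑ i, (br C)ᵀ a i * br C i b
      = ∑ i : Fin n, Cᵀ (Fin.natAdd m a) (Fin.natAdd m i) * C (Fin.natAdd m i) (Fin.natAdd m b) := by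
        refine Finset.sum_congr rfl fun i _ => ?_
        simp [br, Matrix.transpose_apply]
    _ = (1 : Matrix (Fin (m + n)) (Fin (m + n)) ℝ) (Fin.natAdd m a) (Fin.natAdd m b) := h
    _ = (1 : Matrix (Fin n) (Fin n) ℝ) a b := by
        by_cases hab : a = b
        · subst hab; simp
        · rw [Matrix.one_apply_ne hab, Matrix.one_apply_ne]
          intro hcon
          apply hab
          have hval := congrArg Fin.val hcon
          simp at hval
          exact Fin.ext hval

lemma col_mem_lattice {M : Matrix (Fin d) (Fin d) ℝ} (j : Fin d) :
    (fun i => M i j) ∈ {v | ∃ z : Fin d → ℤ, v = M *ᵥ fun i => ((z i : ℝ))} := by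
  classical
  refine ⟨fun s => if s = j then 1 else 0, ?_⟩
  funext i
  simp [Matrix.mulVec, dotProduct, mul_ite, Finset.sum_ite_eq']

lemma eq_zero_of_mul_lattice {p : ℕ} {X : Matrix (Fin p) (Fin d) ℝ}
    {M : Matrix (Fin d) (Fin d) ℝ}
    (hM : M.det ≠ 0) (h : ∀ j, X *ᵥ (fun i => M i j) = 0) : X = 0 := by
  have hXM : X * M = 0 := by
    ext a j
    have := congrFun (h j) a
    simpa [Matrix.mulVec, dotProduct, Matrix.mul_apply] using this
  calc X = X * (M * M⁻¹) := by
        rw [Matrix.mul_nonsing_inv M (isUnit_iff_ne_zero.mpr hM), Matrix.mul_one]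
    _ = (X * M) * M⁻¹ := by rw [Matrix.mul_assoc]
    _ = 0 := by rw [hXM, Matrix.zero_mul]

/-! ### congruence descent -/

lemma congruent_descend {c : ℝ} (hc : c ≠ 0)
    {Γ₁ Γ₂ : Set (Fin m → ℝ)} {Δ₁ Δ₂ : Set (Fin n → ℝ)}
    (l₁ : IsLattice Γ₁) (l₂ : IsLattice Γ₂) (k₁ : IsLattice Δ₁) (k₂ : IsLattice Δ₂)
    {A B : Set ℝ}
    (hA1 : ∀ u ∈ Γ₁, nsq u ∈ A) (hA2 : ∀ u ∈ Γ₂, nsq u ∈ A)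
    (hB1 : ∀ v ∈ Δ₁, nsq v ∈ B) (hB2 : ∀ v ∈ Δ₂, nsq v ∈ B)
    (sep1 : ∀ a ∈ A, ∀ b ∈ B, a + c ^ 2 * b ∈ A → b = 0)
    (sep2 : ∀ a ∈ A, ∀ b ∈ B, a + c ^ 2 * b ∈ (fun x => c ^ 2 * x) '' B → a = 0)
    (hcon : LatticeCongruent (pr c Γ₁ Δ₁) (pr c Γ₂ Δ₂)) :
    LatticeCongruent Γ₁ Γ₂ ∧ LatticeCongruent Δ₁ Δ₂ := by
  obtain ⟨C, hC, hCim⟩ := hcon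
  have npres : ∀ w, nsq (C *ᵥ w) = nsq w := fun w => nsq_mulVec hC w
  have char1 := pr_left_char (c := c) (Γ := Γ₁) k₁ hA1 hB1 sep1
  have char2 := pr_left_char (c := c) (Γ := Γ₂) k₂ hA2 hB2 sep1
  have char1r := pr_right_char (c := c) (Δ := Δ₁) l₁ hA1 hB1 sep2
  have char2r := pr_right_char (c := c) (Δ := Δ₂) l₂ hA2 hB2 sep2
  -- transport of the distinguished subsets
  have himg : ∀ S : Set ℝ,
      (fun w => C *ᵥ w) '' {w ∈ pr c Γ₁ Δ₁ | nsq w ∈ S} = {w ∈ pr c Γ₂ Δ₂ | nsq w ∈ S} := by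
    intro S
    ext w
    constructor
    · rintro ⟨w', ⟨hw', hwS⟩, rfl⟩
      refine ⟨?_, ?_⟩
      · rw [← hCim]; exact Set.mem_image_of_mem _ hw'
      · rw [npres]; exact hwS
    · rintro ⟨hw, hwS⟩
      rw [← hCim] at hw
      obtain ⟨w', hw', rfl⟩ := hw
      rw [npres] at hwS
      exact ⟨w', ⟨hw', hwS⟩, rfl⟩
  have fact1 : ∀ u ∈ Γ₁, ∃ u' ∈ Γ₂, C *ᵥ Fin.append u (0 : Fin n → ℝ) = Fin.append u' 0 := by
    intro u hu
    have hmem : Fin.append u (0 : Fin n → ℝ) ∈ {w ∈ pr c Γ₁ Δ₁ | nsq w ∈ A} := by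
      rw [char1]; exact ⟨u, hu, rfl⟩
    have : C *ᵥ Fin.append u (0 : Fin n → ℝ) ∈ {w ∈ pr c Γ₂ Δ₂ | nsq w ∈ A} := by
      rw [← himg A]; exact Set.mem_image_of_mem _ hmem
    rw [char2] at this
    obtain ⟨u', hu', heq⟩ := this
    exact ⟨u', hu', heq.symm⟩
  have fact1' : ∀ u' ∈ Γ₂, ∃ u ∈ Γ₁, C *ᵥ Fin.append u (0 : Fin n → ℝ) = Fin.append u' 0 := by
    intro u' hu'
    have hmem : Fin.append u' (0 : Fin n → ℝ) ∈ {w ∈ pr c Γ₂ Δ₂ | nsq w ∈ A} := by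
      rw [char2]; exact ⟨u', hu', rfl⟩
    rw [← himg A] at hmem
    obtain ⟨w, hw, heq⟩ := hmem
    rw [char1] at hw
    obtain ⟨u, hu, rfl⟩ := hw
    exact ⟨u, hu, heq⟩
  have fact2 : ∀ v ∈ Δ₁, ∃ v' ∈ Δ₂,
      C *ᵥ Fin.append (0 : Fin m → ℝ) (c • v) = Fin.append (0 : Fin m → ℝ) (c • v') := by
    intro v hv
    have hmem : Fin.append (0 : Fin m → ℝ) (c • v) ∈
        {w ∈ pr c Γ₁ Δ₁ | nsq w ∈ (fun x => c ^ 2 * x) '' B} := by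
      rw [char1r]; exact ⟨v, hv, rfl⟩
    have : C *ᵥ Fin.append (0 : Fin m → ℝ) (c • v) ∈
        {w ∈ pr c Γ₂ Δ₂ | nsq w ∈ (fun x => c ^ 2 * x) '' B} := by
      rw [← himg _]; exact Set.mem_image_of_mem _ hmem
    rw [char2r] at this
    obtain ⟨v', hv', heq⟩ := this
    exact ⟨v', hv', heq.symm⟩
  have fact2' : ∀ v' ∈ Δ₂, ∃ v ∈ Δ₁,
      C *ᵥ Fin.append (0 : Fin m → ℝ) (c • v) = Fin.append (0 : Fin m → ℝ) (c • v') := by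
    intro v' hv'
    have hmem : Fin.append (0 : Fin m → ℝ) (c • v') ∈
        {w ∈ pr c Γ₂ Δ₂ | nsq w ∈ (fun x => c ^ 2 * x) '' B} := by
      rw [char2r]; exact ⟨v', hv', rfl⟩
    rw [← himg _] at hmem
    obtain ⟨w, hw, heq⟩ := hmem
    rw [char1r] at hw
    obtain ⟨v, hv, rfl⟩ := hw
    exact ⟨v, hv, heq⟩
  -- the off-diagonal blocks vanish
  obtain ⟨M₁, hM₁, hΓ₁eq⟩ := l₁
  obtain ⟨N₁, hN₁, hΔ₁eq⟩ := k₁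
  have hbl : bl C = 0 := by
    refine eq_zero_of_mul_lattice hM₁ fun j => ?_
    have hcol : (fun i => M₁ i j) ∈ Γ₁ := by rw [hΓ₁eq]; exact col_mem_lattice j
    obtain ⟨u', _, heq⟩ := fact1 _ hcol
    rw [mulVec_append] at heq
    have hr := congrArg rightOf heq
    simpa using hr
  have htr : tr C = 0 := by
    refine eq_zero_of_mul_lattice hN₁ fun j => ?_
    have hcol : (fun i => N₁ i j) ∈ Δ₁ := by rw [hΔ₁eq]; exact col_mem_lattice j
    obtain ⟨v', _, heq⟩ := fact2 _ hcol
    rw [mulVec_append] at heq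
    have hl := congrArg leftOf heq
    simp [Matrix.mulVec_smul] at hl
    rcases hl with h | h
    · exact absurd h hc
    · exact h
  -- images of the factors
  have im1 : (fun u => tl C *ᵥ u) '' Γ₁ = Γ₂ := by
    ext u'
    constructor
    · rintro ⟨u, hu, rfl⟩
      obtain ⟨u'', hu'', heq⟩ := fact1 u hu
      rw [mulVec_append] at heq
      have hl := congrArg leftOf heq
      simp at hl
      simpa [hl] using hu''
    · intro hu'
      obtain ⟨u, hu, heq⟩ := fact1' u' hu'
      rw [mulVec_append] at heq
      have hl := congrArg leftOf heq
      simp at hl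
      exact ⟨u, hu, hl⟩
  have im2 : (fun v => br C *ᵥ v) '' Δ₁ = Δ₂ := by
    ext v'
    constructor
    · rintro ⟨v, hv, rfl⟩
      obtain ⟨v'', hv'', heq⟩ := fact2 v hv
      rw [mulVec_append] at heq
      have hr := congrArg rightOf heq
      simp [Matrix.mulVec_smul] at hr
      have : br C *ᵥ v = v'' := smul_right_injective _ hc hr
      simpa [this] using hv''
    · intro hv'
      obtain ⟨v, hv, heq⟩ := fact2' v' hv'
      rw [mulVec_append] at heq
      have hr := congrArg rightOf heq
      simp [Matrix.mulVec_smul] at hr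
      exact ⟨v, hv, smul_right_injective _ hc hr⟩
  exact ⟨⟨tl C, block_orth_tl hC hbl, im1⟩, ⟨br C, block_orth_br hC htr, im2⟩⟩

/-! ### choosing a generic scaling factor -/

lemma exists_good_r {A B : Set ℝ} (hA : A.Countable) (hB : B.Countable) :
    ∃ r : ℝ, 0 < r ∧
      (∀ a ∈ A, ∀ b ∈ B, a + r * b ∈ A → b = 0) ∧
      (∀ a ∈ A, ∀ b ∈ B, a + r * b ∈ (fun x => r * x) '' B → a = 0) := by
  classical
  set bad : Set ℝ :=
    ((fun p : ℝ × ℝ × ℝ => (p.1 - p.2.1) / p.2.2) '' (A ×ˢ A ×ˢ B)) ∪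
    ((fun p : ℝ × ℝ × ℝ => p.1 / (p.2.1 - p.2.2)) '' (A ×ˢ B ×ˢ B)) with hbad
  have hbadc : bad.Countable :=
    ((hA.prod (hA.prod hB)).image _).union ((hA.prod (hB.prod hB)).image _)
  have hnot : ¬ (Set.Ioi (0:ℝ) ⊆ bad) := by
    intro hsub
    have hio : (Set.Ioi (0:ℝ)).Countable := hbadc.mono hsub
    have huniv : (Set.univ : Set ℝ).Countable := by
      have hpre : (Set.univ : Set ℝ) ⊆ Real.exp ⁻¹' (Set.Ioi 0) := by
        intro x _; exact Real.exp_pos x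
      exact ((hio.preimage Real.exp_injective).mono hpre).mono (fun x hx => hx)
    exact Cardinal.not_countable_real huniv
  obtain ⟨r, hr, hrbad⟩ := Set.not_subset.mp hnot
  refine ⟨r, hr, ?_, ?_⟩
  · intro a ha b hb hmem
    by_contra hb0
    apply hrbad
    left
    refine ⟨(a + r * b, a, b), ⟨hmem, ha, hb⟩, ?_⟩
    show (a + r * b - a) / b = r
    have h1 : a + r * b - a = r * b := by ring
    rw [h1, mul_div_cancel_right₀ _ hb0]
  · intro a ha b hb hmem
    obtain ⟨b', hb', heq⟩ := hmem
    by_contra ha0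
    apply hrbad
    right
    refine ⟨(a, b', b), ⟨ha, hb', hb⟩, ?_⟩
    show a / (b' - b) = r
    have key : a = r * (b' - b) := by
      have : r * b' = a + r * b := heq
      ring_nf
      linarith
    have hbb : b' - b ≠ 0 := by
      intro h0
      exact ha0 (by rw [key, h0, mul_zero])
    rw [key, mul_div_cancel_right₀ _ hbb]

end
end Stmt17


/-- if dimension `m` admits a choir of size `k` and dimension `n` admits a
choir of size `l`, then dimension `m + n` admits a choir of size `k * l`; i.e. the choir
numbers are supermultiplicative. -/
theorem stmt_17 (m n k l : ℕ) (hm : 1 ≤ m) (hn : 1 ≤ n)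
    (h₁ : AdmitsChoir m k) (h₂ : AdmitsChoir n l) :
    AdmitsChoir (m + n) (k * l) := by
  classical
  obtain ⟨Γ, hΓlat, hΓiso, hΓcon⟩ := h₁
  obtain ⟨Δ, hΔlat, hΔiso, hΔcon⟩ := h₂
  set A : Set ℝ := ⋃ i, Stmt17.nsq '' (Γ i) with hA
  set B : Set ℝ := ⋃ j, Stmt17.nsq '' (Δ j) with hB
  have hAc : A.Countable :=
    Set.countable_iUnion fun i => (Stmt17.lattice_countable (hΓlat i)).image _
  have hBc : B.Countable :=
    Set.countable_iUnion fun j => (Stmt17.lattice_countable (hΔlat j)).image _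
  obtain ⟨r, hr, sep1, sep2⟩ := Stmt17.exists_good_r hAc hBc
  set c : ℝ := Real.sqrt r with hcdef
  have hc : c ≠ 0 := ne_of_gt (Real.sqrt_pos.mpr hr)
  have hc2 : c ^ 2 = r := Real.sq_sqrt hr.le
  have sep1' : ∀ a ∈ A, ∀ b ∈ B, a + c ^ 2 * b ∈ A → b = 0 := by
    intro a ha b hb h
    exact sep1 a ha b hb (by rwa [hc2] at h)
  have sep2' : ∀ a ∈ A, ∀ b ∈ B, a + c ^ 2 * b ∈ (fun x => c ^ 2 * x) '' B → a = 0 := by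
    intro a ha b hb h
    rw [hc2] at h
    exact sep2 a ha b hb h
  have hmemA : ∀ i, ∀ u ∈ Γ i, Stmt17.nsq u ∈ A :=
    fun i u hu => Set.mem_iUnion.mpr ⟨i, ⟨u, hu, rfl⟩⟩
  have hmemB : ∀ j, ∀ v ∈ Δ j, Stmt17.nsq v ∈ B :=
    fun j v hv => Set.mem_iUnion.mpr ⟨j, ⟨v, hv, rfl⟩⟩
  set e : Fin k × Fin l ≃ Fin (k * l) := finProdFinEquiv with he
  refine ⟨fun p => Stmt17.pr c (Γ (e.symm p).1) (Δ (e.symm p).2), ?_, ?_, ?_⟩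
  · intro p
    exact Stmt17.pr_isLattice hc (hΓlat _) (hΔlat _)
  · intro p q
    exact Stmt17.pr_iso hc (hΓlat _) (hΓlat _) (hΔlat _) (hΔlat _) (hΓiso _ _) (hΔiso _ _)
  · intro p q hpq hcon
    obtain ⟨cg, cd⟩ := Stmt17.congruent_descend hc (hΓlat _) (hΓlat _) (hΔlat _) (hΔlat _)
      (hmemA _) (hmemA _) (hmemB _) (hmemB _) sep1' sep2' hcon
    by_cases hij : (e.symm p).1 = (e.symm q).1
    · have hj : (e.symm p).2 ≠ (e.symm q).2 := by
        intro h2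
        exact hpq (e.symm.injective (Prod.ext hij h2))
      rw [hij] at cg
      exact hΔcon _ _ hj cd
    · exact hΓcon _ _ hij cg
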